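/- In ℝ^d (d ≥ 2), every nonzero point x in (B(0,1) \ B(0,√(2/3))) ∩ B(e_1, √5/2) satisfies ⟨x/‖x‖₂, e_1⟩ ≥ √(1 − 1077/1152), i.e., the set is contained in the cone subtended by the spherical cap of angular radius r with sin r = √1077/(24√2). -/

import Mathlib

open Metric

/-- Every nonzero point of `(B(0,1) \ B(0,√(2/3))) ∩ B(e₁, √5/2)` lies in the cone
over the spherical cap of angular radius `r` with `sin r = √1077/(24√2)`. -/
theorem middle_piece_in_cone (d : ℕ) (hd : 2 ≤ d)
    (x : EuclideanSpace ℝ (Fin d)) (hx : x ≠ 0)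
    (h1 : x ∈ closedBall (0 : EuclideanSpace ℝ (Fin d)) 1 \
      closedBall (0 : EuclideanSpace ℝ (Fin d)) (Real.sqrt (2 / 3)))
    (h2 : x ∈ closedBall (EuclideanSpace.single (⟨0, by omega⟩ : Fin d) (1 : ℝ))
      (Real.sqrt 5 / 2)) :
    Real.sqrt (1 - 1077 / 1152) ≤
      inner ℝ (‖x‖⁻¹ • x) (EuclideanSpace.single (⟨0, by omega⟩ : Fin d) (1 : ℝ)) := by
  set e : EuclideanSpace ℝ (Fin d) := EuclideanSpace.single (⟨0, by omega⟩ : Fin d) (1 : ℝ)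
    with he
  obtain ⟨h1a, h1b⟩ := h1
  rw [mem_closedBall, dist_zero_right] at h1a
  rw [mem_closedBall, dist_zero_right] at h1b
  push_neg at h1b
  rw [mem_closedBall, dist_eq_norm] at h2
  have hn : (0:ℝ) < ‖x‖ := norm_pos_iff.mpr hx
  have hE : ‖e‖ = 1 := by
    simp [he, EuclideanSpace.norm_single]
  have hsq : ‖x - e‖ ^ 2 = ‖x‖ ^ 2 - 2 * inner ℝ x e + 1 := by
    rw [@norm_sub_sq_real _ _ _ x e, hE]; ring
  have h2' : ‖x - e‖ ^ 2 ≤ 5 / 4 := by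
    have h5 : (Real.sqrt 5 / 2) ^ 2 = 5 / 4 := by
      rw [div_pow, Real.sq_sqrt (by norm_num : (5:ℝ) ≥ 0)]; norm_num
    nlinarith [norm_nonneg (x - e), Real.sqrt_nonneg 5]
  have ha : ‖x‖ ^ 2 - 1 / 4 ≤ 2 * (inner ℝ x e : ℝ) := by nlinarith
  set n₀ : ℝ := Real.sqrt (2 / 3) with hn₀
  set c : ℝ := Real.sqrt (1 - 1077 / 1152) with hc
  have hc2 : c ^ 2 = 75 / 1152 := by
    rw [hc, Real.sq_sqrt (by norm_num : (0:ℝ) ≤ 1 - 1077 / 1152)]; norm_num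
  have hn₀2 : n₀ ^ 2 = 2 / 3 := Real.sq_sqrt (by norm_num)
  have hcn₀ : c ≤ n₀ := by
    rw [hc, hn₀]
    exact Real.sqrt_le_sqrt (by norm_num)
  have hcn₀' : c * n₀ = 5 / 24 := by
    rw [hc, hn₀, ← Real.sqrt_mul (by norm_num)]
    rw [show (1 - 1077 / 1152) * (2 / 3) = (5/24 : ℝ) ^ 2 by norm_num]
    exact Real.sqrt_sq (by norm_num)
  have hc0 : 0 ≤ c := Real.sqrt_nonneg _
  have hnb : n₀ ≤ ‖x‖ := le_of_lt h1b
  have key : c * ‖x‖ ≤ (inner ℝ x e : ℝ) := by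
    nlinarith [sq_nonneg (‖x‖ - n₀), mul_nonneg (sub_nonneg.mpr hnb) (sub_nonneg.mpr hcn₀)]
  have : (inner ℝ (‖x‖⁻¹ • x) e : ℝ) = ‖x‖⁻¹ * inner ℝ x e := real_inner_smul_left x e ‖x‖⁻¹
  rw [this]
  rw [show ‖x‖⁻¹ * (inner ℝ x e : ℝ) = (inner ℝ x e : ℝ) / ‖x‖ by ring, le_div_iff₀ hn]
  exact key
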